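/- During two consecutive k-phases i-1 and i of a paging request sequence, exactly k + m_i distinct items are requested, where m_i is the number of new requests in phase i; consequently any paging strategy with h servers makes at least k + m_i - h server movements (faults) during those two phases. -/

import Mathlib

/-- Length of the maximal prefix of `r` containing at most `k` distinct items. -/
def maxPrefixLen {α : Type*} [DecidableEq α] (k : ℕ) (r : List α) : ℕ :=
  ((List.range (r.length + 1)).filter (fun n => (r.take n).dedup.length ≤ k)).foldr max 0

/-- Greedy phase partition, with fuel for termination. -/
def phasesAux {α : Type*} [DecidableEq α] (k : ℕ) : ℕ → List α → List (List α)
  | 0, _ => []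
  | _, [] => []
  | (fuel+1), r =>
      let n := max 1 (maxPrefixLen k r)
      r.take n :: phasesAux k fuel (r.drop n)

/-- The `k`-phase partition of `r`: greedy maximal consecutive blocks, each
containing requests to at most `k` distinct items. -/
def phases {α : Type*} [DecidableEq α] (k : ℕ) (r : List α) : List (List α) :=
  phasesAux k r.length r

/-- `L(k,r)`: the number of `k`-phases of `r`, minus 1. -/
def numPhases {α : Type*} [DecidableEq α] (k : ℕ) (r : List α) : ℕ :=
  (phases k r).length - 1

/-- For each `k`-phase other than the first, the number of new requests:
items requested in the phase but not in the previous phase. -/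
def newCounts {α : Type*} [DecidableEq α] (k : ℕ) (r : List α) : List ℕ :=
  ((phases k r).zip (phases k r).tail).map
    (fun p => (p.2.dedup.filter (fun x => x ∉ p.1)).length)

/-- `m(k,r)`: the average number of new requests per `k`-phase (other than the first). -/
noncomputable def avgNew {α : Type*} [DecidableEq α] (k : ℕ) (r : List α) : ℝ :=
  ((newCounts k r).sum : ℝ) / (numPhases k r : ℝ)

/-- Index in `r` at which the `i`-th `k`-phase starts. -/
def phaseStart {α : Type*} [DecidableEq α] (k : ℕ) (r : List α) (i : ℕ) : ℕ :=
  (((phases k r).take i).map List.length).sum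

/-- An execution of a paging strategy with `h` servers (cache slots) on request
sequence `r`.  `cache i` is the set of items with a server just before request `i`
is served; the cache starts empty, never exceeds `h` items, contains each
requested item right after it is served, and only requested items may enter. -/
structure PagingSchedule {α : Type*} [DecidableEq α] (h : ℕ) (r : List α) where
  cache : ℕ → Finset α
  init : cache 0 = ∅
  card_le : ∀ i, (cache i).card ≤ h
  serves : ∀ i : Fin r.length, r.get i ∈ cache (i.val + 1)
  update : ∀ i : Fin r.length, cache (i.val + 1) ⊆ cache i.val ∪ {r.get i}

/-- Number of faults: requests to items not currently in the cache. -/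
def faults {α : Type*} [DecidableEq α] {h : ℕ} {r : List α} (s : PagingSchedule h r) : ℕ :=
  (Finset.univ.filter (fun i : Fin r.length => r.get i ∉ s.cache i.val)).card

/-- Cost of a schedule: each server's first placement is free, so the number of
(paid) server movements is the number of faults minus `h`. -/
def schedCost {α : Type*} [DecidableEq α] {h : ℕ} {r : List α} (s : PagingSchedule h r) : ℕ :=
  faults s - h

/-- Optimal offline paging cost with `h` servers on `r`. -/
noncomputable def costOpt {α : Type*} [DecidableEq α] (h : ℕ) (r : List α) : ℕ :=
  sInf {c | ∃ s : PagingSchedule h r, c = schedCost s}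

/-- Number of faults incurred at requests with index in `[a, b)`. -/
def windowFaults {α : Type*} [DecidableEq α] {h : ℕ} {r : List α}
    (s : PagingSchedule h r) (a b : ℕ) : ℕ :=
  (Finset.univ.filter
    (fun i : Fin r.length => a ≤ i.val ∧ i.val < b ∧ r.get i ∉ s.cache i.val)).card

/-- A schedule is conservative if it faults at most `h` times during any
consecutive subsequence of requests to at most `h` distinct items. -/
def Conservative {α : Type*} [DecidableEq α] {h : ℕ} {r : List α}
    (s : PagingSchedule h r) : Prop :=
  ∀ a b : ℕ, ((r.drop a).take (b - a)).dedup.length ≤ h → windowFaults s a b ≤ h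

set_option linter.all false

section
variable {α : Type*} [DecidableEq α]

lemma foldr_max_le {l : List ℕ} {b : ℕ} (h : ∀ x ∈ l, x ≤ b) : l.foldr max 0 ≤ b := by
  induction l with
  | nil => simpa using Nat.zero_le b
  | cons a t ih => simp only [List.foldr_cons, max_le_iff]
                   exact ⟨h a (by simp), ih (fun x hx => h x (by simp [hx]))⟩

lemma le_foldr_max {l : List ℕ} {a : ℕ} (h : a ∈ l) : a ≤ l.foldr max 0 := by
  induction l with
  | nil => simp at h
  | cons x t ih =>
    rcases List.mem_cons.1 h with rfl | h
    · exact le_max_left _ _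
    · exact le_trans (ih h) (le_max_right _ _)

lemma foldr_max_mem (l : List ℕ) : l.foldr max 0 = 0 ∨ l.foldr max 0 ∈ l := by
  induction l with
  | nil => simp
  | cons x t ih =>
    simp only [List.foldr_cons]
    rcases le_or_gt x (t.foldr max 0) with hle | hlt
    · rw [max_eq_right hle]
      rcases ih with h | h
      · left; exact h
      · right; exact List.mem_cons_of_mem _ h
    · rw [max_eq_left hlt.le]; right; exact List.mem_cons_self

lemma maxPrefixLen_le (k : ℕ) (r : List α) : maxPrefixLen k r ≤ r.length := by
  apply foldr_max_le
  intro x hx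
  have := (List.mem_filter.1 hx).1
  rw [List.mem_range] at this
  omega

lemma maxPrefixLen_spec (k : ℕ) (r : List α) :
    (r.take (maxPrefixLen k r)).dedup.length ≤ k := by
  rcases foldr_max_mem ((List.range (r.length + 1)).filter
      (fun n => decide ((r.take n).dedup.length ≤ k))) with h | h
  · unfold maxPrefixLen; rw [h]; simp
  · have := (List.mem_filter.1 h).2
    exact of_decide_eq_true this

lemma le_maxPrefixLen {k n : ℕ} {r : List α} (h1 : n ≤ r.length)
    (h2 : (r.take n).dedup.length ≤ k) : n ≤ maxPrefixLen k r := by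
  apply le_foldr_max
  rw [List.mem_filter, List.mem_range]
  exact ⟨by omega, by simpa using h2⟩

lemma one_le_maxPrefixLen {k : ℕ} (hk : 0 < k) {r : List α} (hr : r ≠ []) :
    1 ≤ maxPrefixLen k r := by
  apply le_maxPrefixLen
  · have : 0 < r.length := List.length_pos_iff.2 hr
    omega
  · calc (r.take 1).dedup.length ≤ (r.take 1).length := (r.take 1).dedup_sublist.length_le
      _ ≤ 1 := by simp
      _ ≤ k := hk

lemma dedup_take_eq_k {k : ℕ} (hk : 0 < k) {r : List α}
    (hn : maxPrefixLen k r < r.length) :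
    (r.take (maxPrefixLen k r)).dedup.length = k := by
  set n := maxPrefixLen k r with hdef
  have hspec : (r.take n).dedup.length ≤ k := maxPrefixLen_spec k r
  have hsucc : ¬ ((r.take (n+1)).dedup.length ≤ k) := by
    intro hle
    have := le_maxPrefixLen (by omega) hle
    omega
  have hstep : (r.take (n+1)).dedup.length ≤ (r.take n).dedup.length + 1 := by
    rw [List.take_succ]
    rw [← List.card_toFinset, ← List.card_toFinset]
    rw [List.toFinset_append]
    calc ((r.take n).toFinset ∪ (r[n]?).toList.toFinset).card
        ≤ (r.take n).toFinset.card + (r[n]?).toList.toFinset.card := Finset.card_union_le _ _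
      _ ≤ (r.take n).toFinset.card + 1 := by
          gcongr
          calc (r[n]?).toList.toFinset.card ≤ (r[n]?).toList.length := by
                rw [List.card_toFinset]; exact (List.dedup_sublist _).length_le
            _ ≤ 1 := by cases r[n]? <;> simp
  omega

end

section
variable {α : Type*} [DecidableEq α]

lemma phasesAux_nil (k fuel : ℕ) : phasesAux (α := α) k fuel [] = [] := by
  cases fuel <;> rfl

lemma phasesAux_cons (k fuel : ℕ) (r : List α) (hr : r ≠ []) :
    phasesAux k (fuel+1) r =
      r.take (max 1 (maxPrefixLen k r)) ::
        phasesAux k fuel (r.drop (max 1 (maxPrefixLen k r))) := by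
  cases r with
  | nil => exact absurd rfl hr
  | cons a t => rfl

/-- Structural description of each phase. -/
lemma phasesAux_get (k : ℕ) : ∀ fuel (r : List α), r.length ≤ fuel →
    ∀ j, j < (phasesAux k fuel r).length →
    (r.drop ((((phasesAux k fuel r).take j).map List.length).sum) ≠ [] ∧
     (phasesAux k fuel r).getD j [] =
       (r.drop ((((phasesAux k fuel r).take j).map List.length).sum)).take
         (max 1 (maxPrefixLen k (r.drop ((((phasesAux k fuel r).take j).map List.length).sum)))) ∧
     (j + 1 < (phasesAux k fuel r).length →
       max 1 (maxPrefixLen k (r.drop ((((phasesAux k fuel r).take j).map List.length).sum)))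
         < (r.drop ((((phasesAux k fuel r).take j).map List.length).sum)).length)) := by
  intro fuel
  induction fuel with
  | zero => intro r hr j hj; simp [phasesAux] at hj
  | succ fuel ih =>
    intro r hr j hj
    rcases eq_or_ne r [] with rfl | hne
    · rw [phasesAux_nil] at hj; simp at hj
    · have hrpos : 0 < r.length := List.length_pos_iff.2 hne
      set n := max 1 (maxPrefixLen k r) with hn
      have hcons : phasesAux k (fuel+1) r =
          r.take n :: phasesAux k fuel (r.drop n) := phasesAux_cons k fuel r hne
      have hdroplen : (r.drop n).length ≤ fuel := by
        rw [List.length_drop]; omega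
      cases j with
      | zero =>
        refine ⟨by simpa using hne, by simp [hcons, hn], ?_⟩
        intro h2
        rw [hcons] at h2
        simp only [List.length_cons] at h2
        have hrest : phasesAux k fuel (r.drop n) ≠ [] := by
          intro hnil; rw [hnil] at h2; simp at h2
        have hdropne : r.drop n ≠ [] := by
          intro hnil
          rw [hnil, phasesAux_nil] at hrest
          exact hrest rfl
        have hnlt : n < r.length := by
          by_contra hge
          push_neg at hge
          exact hdropne (List.drop_eq_nil_of_le hge)
        simp only [List.take_zero, List.map_nil, List.sum_nil, List.drop_zero]
        exact hnlt
      | succ j =>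
        have hj' : j < (phasesAux k fuel (r.drop n)).length := by
          rw [hcons] at hj; simpa using hj
        have key := ih (r.drop n) hdroplen j hj'
        have hsum : ((((phasesAux k (fuel+1) r).take (j+1)).map List.length).sum)
            = n + ((((phasesAux k fuel (r.drop n)).take j).map List.length).sum) := by
          rw [hcons]
          simp only [List.take_succ_cons, List.map_cons, List.sum_cons]
          congr 1
          have hml := maxPrefixLen_le k r
          rw [List.length_take]
          omega
        have hdrop2 : r.drop ((((phasesAux k (fuel+1) r).take (j+1)).map List.length).sum)
            = (r.drop n).drop ((((phasesAux k fuel (r.drop n)).take j).map List.length).sum) := by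
          rw [hsum, List.drop_drop, Nat.add_comm]
        have hgetD : (phasesAux k (fuel+1) r).getD (j+1) []
            = (phasesAux k fuel (r.drop n)).getD j [] := by
          rw [hcons]; rfl
        rw [hdrop2, hgetD]
        refine ⟨key.1, key.2.1, ?_⟩
        intro h2
        apply key.2.2
        rw [hcons] at h2
        simp only [List.length_cons] at h2
        omega

end

section
variable {α : Type*} [DecidableEq α]

lemma mem_cache_back {h : ℕ} {r : List α} (s : PagingSchedule h r) {x : α} {a : ℕ} :
    ∀ j, a + j ≤ r.length → x ∈ s.cache (a + j) →
      (∀ m (hm : a + m < r.length), m < j → r.get ⟨a + m, hm⟩ ≠ x) →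
      x ∈ s.cache a := by
  intro j
  induction j with
  | zero => intro _ hx _; exact hx
  | succ j ih =>
    intro hle hx hne
    have hlt : a + j < r.length := by omega
    have hsub := s.update ⟨a + j, hlt⟩
    have : x ∈ s.cache (a + j) ∪ {r.get ⟨a + j, hlt⟩} := by
      apply hsub
      simpa [Nat.add_assoc] using hx
    rcases Finset.mem_union.1 this with hmem | hmem
    · exact ih (by omega) hmem (fun m hm hmj => hne m hm (by omega))
    · exact absurd (Finset.mem_singleton.1 hmem).symm (hne j hlt (by omega))

lemma window_lower_bound {h : ℕ} {r : List α} (s : PagingSchedule h r) (a b : ℕ) :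
    ((r.drop a).take (b - a)).toFinset.card ≤ windowFaults s a b + h := by
  classical
  set W := (r.drop a).take (b - a) with hW
  set F := (Finset.univ.filter
    (fun i : Fin r.length => a ≤ i.val ∧ i.val < b ∧ r.get i ∉ s.cache i.val)) with hF
  have hsub : W.toFinset ⊆ F.image (fun i => r.get i) ∪ s.cache a := by
    intro x hx
    rw [List.mem_toFinset] at hx
    obtain ⟨m, hm, hget⟩ := List.mem_iff_getElem.1 hx
    have hWlen : W.length ≤ b - a := by rw [hW]; simp
    have hWlen2 : W.length ≤ r.length - a := by rw [hW]; simp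
    have hmb : a + m < b := by omega
    have hmr : a + m < r.length := by omega
    have hWget : W[m] = r[a + m]'hmr := by
      simp only [hW, List.getElem_take, List.getElem_drop]
    -- the set of window indices where x is requested
    set T := (Finset.univ.filter
      (fun j : Fin r.length => a ≤ j.val ∧ j.val < b ∧ r.get j = x)) with hT
    have hTne : T.Nonempty := by
      refine ⟨⟨a + m, hmr⟩, ?_⟩
      rw [hT, Finset.mem_filter]
      refine ⟨Finset.mem_univ _, by simpa using Nat.le_add_right a m, by simpa using hmb, ?_⟩
      rw [← hget, hWget]; rfl
    set j0 := T.min' hTne with hj0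
    have hj0T : j0 ∈ T := T.min'_mem hTne
    rw [hT, Finset.mem_filter] at hj0T
    obtain ⟨-, hj0a, hj0b, hj0x⟩ := hj0T
    by_cases hcache : x ∈ s.cache j0.val
    · apply Finset.mem_union_right
      apply mem_cache_back s (j0.val - a) (by omega)
      · have : a + (j0.val - a) = j0.val := by omega
        rw [this]; exact hcache
      · intro m' hm' hm'lt hx'
        have : (⟨a + m', hm'⟩ : Fin r.length) ∈ T := by
          rw [hT, Finset.mem_filter]
          exact ⟨Finset.mem_univ _, by simp only [Fin.val_mk]; omega,
            by simp only [Fin.val_mk]; omega, hx'⟩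
        have := T.min'_le _ this
        rw [← hj0] at this
        have : j0.val ≤ a + m' := this
        omega
    · apply Finset.mem_union_left
      rw [Finset.mem_image]
      refine ⟨j0, ?_, ?_⟩
      · rw [hF, Finset.mem_filter]
        refine ⟨Finset.mem_univ _, hj0a, hj0b, ?_⟩
        rw [hj0x]; exact hcache
      · exact hj0x
  calc W.toFinset.card ≤ (F.image (fun i => r.get i) ∪ s.cache a).card :=
        Finset.card_le_card hsub
    _ ≤ (F.image (fun i => r.get i)).card + (s.cache a).card := Finset.card_union_le _ _
    _ ≤ F.card + h := by
        gcongr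
        · exact Finset.card_image_le
        · exact s.card_le a
    _ = windowFaults s a b + h := rfl

end

section
variable {α : Type*} [DecidableEq α]

lemma dedup_append_length (P Q : List α) :
    (P ++ Q).dedup.length = P.dedup.length + (Q.dedup.filter (fun x => x ∉ P)).length := by
  classical
  rw [← List.card_toFinset, ← List.card_toFinset]
  have h1 : (Q.dedup.filter (fun x => x ∉ P)).length
      = (Q.toFinset \ P.toFinset).card := by
    have hnd : (Q.dedup.filter (fun x => x ∉ P)).Nodup := Q.nodup_dedup.filter _
    rw [← List.toFinset_card_of_nodup hnd]
    congr 1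
    ext x
    simp [List.mem_filter, Finset.mem_sdiff]
  rw [h1, List.toFinset_append]
  have h2 := Finset.card_sdiff_add_card Q.toFinset P.toFinset
  rw [Finset.union_comm] at h2
  omega

lemma phases_get (k : ℕ) (r : List α) (j : ℕ) (hj : j < (phases k r).length) :
    r.drop (phaseStart k r j) ≠ [] ∧
    (phases k r).getD j [] = (r.drop (phaseStart k r j)).take
      (max 1 (maxPrefixLen k (r.drop (phaseStart k r j)))) ∧
    (j + 1 < (phases k r).length →
      max 1 (maxPrefixLen k (r.drop (phaseStart k r j)))
        < (r.drop (phaseStart k r j)).length) :=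
  phasesAux_get k r.length r le_rfl j hj

lemma phaseStart_succ (k : ℕ) (r : List α) (j : ℕ) (hj : j < (phases k r).length) :
    phaseStart k r (j+1) = phaseStart k r j + ((phases k r).getD j []).length := by
  rw [phaseStart, phaseStart, List.take_succ, List.map_append, List.sum_append]
  congr 1
  rw [List.getElem?_eq_getElem hj]
  simp [List.getD, List.getElem?_eq_getElem hj]

lemma newCounts_getD (k : ℕ) (r : List α) (j : ℕ) (hj : j + 1 < (phases k r).length) :
    (newCounts k r).getD j 0 =
      (((phases k r).getD (j+1) []).dedup.filter
        (fun x => x ∉ (phases k r).getD j [])).length := by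
  have hzlen : j < ((phases k r).zip (phases k r).tail).length := by
    rw [List.length_zip, List.length_tail]
    omega
  rw [newCounts, List.getD_eq_getElem _ _ (by simpa using hzlen)]
  rw [List.getElem_map, List.getElem_zip, List.getElem_tail]
  rw [List.getD_eq_getElem _ _ hj, List.getD_eq_getElem _ _ (by omega)]

end


/-- two consecutive `k`-phases `i-1`, `i` together request exactly
`k + m_i` distinct items, and any paging schedule with `h` servers faults at
least `k + m_i - h` times during those two phases. -/
theorem consecutive_phases_distinct_and_faults {α : Type*} [DecidableEq α]
    (r : List α) (k h : ℕ) (hk : 0 < k) (i : ℕ) (hi : 0 < i)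
    (hlt : i < (phases k r).length) :
    ((phases k r).getD (i - 1) [] ++ (phases k r).getD i []).dedup.length
        = k + (newCounts k r).getD (i - 1) 0 ∧
    ∀ s : PagingSchedule h r,
      k + (newCounts k r).getD (i - 1) 0
        ≤ windowFaults s (phaseStart k r (i - 1)) (phaseStart k r (i + 1)) + h := by
  classical
  have hi1 : i - 1 + 1 = i := by omega
  obtain ⟨ht1ne, hP, hPfull⟩ := phases_get k r (i-1) (by omega)
  obtain ⟨ht2ne, hQ, -⟩ := phases_get k r i hlt
  set P := (phases k r).getD (i-1) [] with hPdef
  set Q := (phases k r).getD i [] with hQdef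
  set t1 := r.drop (phaseStart k r (i-1)) with ht1
  set t2 := r.drop (phaseStart k r i) with ht2
  have hn1lt : max 1 (maxPrefixLen k t1) < t1.length := hPfull (by omega)
  have hn1 : max 1 (maxPrefixLen k t1) = maxPrefixLen k t1 :=
    max_eq_right (one_le_maxPrefixLen hk ht1ne)
  have hPk : P.dedup.length = k := by
    rw [hP, hn1]
    exact dedup_take_eq_k hk (by rw [← hn1]; exact hn1lt)
  have hm : (newCounts k r).getD (i-1) 0 = (Q.dedup.filter (fun x => x ∉ P)).length := by
    rw [newCounts_getD k r (i-1) (by omega), hi1]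
  have part1 : (P ++ Q).dedup.length = k + (newCounts k r).getD (i-1) 0 := by
    rw [dedup_append_length, hPk, hm]
  refine ⟨part1, ?_⟩
  intro s
  -- lengths and window identification
  have hPlen : P.length = max 1 (maxPrefixLen k t1) := by
    rw [hP, List.length_take]
    omega
  have hstart : phaseStart k r i = phaseStart k r (i-1) + P.length := by
    conv_lhs => rw [← hi1]
    exact phaseStart_succ k r (i-1) (by omega)
  have hstart2 : phaseStart k r (i+1) = phaseStart k r i + Q.length :=
    phaseStart_succ k r i hlt
  have ht2t1 : t2 = t1.drop P.length := by
    rw [ht2, ht1, hstart, List.drop_drop, Nat.add_comm]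
  have hQtake : t2.take Q.length = Q := by
    rw [hQ]
    rw [List.length_take]
    rcases le_total (max 1 (maxPrefixLen k t2)) t2.length with hle | hle
    · rw [min_eq_left hle]
    · rw [min_eq_right hle, List.take_length, List.take_of_length_le hle]
  have hW : (r.drop (phaseStart k r (i-1))).take
      (phaseStart k r (i+1) - phaseStart k r (i-1)) = P ++ Q := by
    have hba : phaseStart k r (i+1) - phaseStart k r (i-1) = P.length + Q.length := by
      omega
    rw [hba, ← ht1, List.take_add, ← ht2t1, hQtake]
    congr 1
    rw [hPlen, hP]
  have := window_lower_bound s (phaseStart k r (i-1)) (phaseStart k r (i+1))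
  rw [hW] at this
  calc k + (newCounts k r).getD (i-1) 0 = (P ++ Q).dedup.length := part1.symm
    _ = (P ++ Q).toFinset.card := (List.card_toFinset _).symm
    _ ≤ _ := this
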